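/- In the forcing G_B, for any vertex a ∈ B of a suitable 2-graph B, the projection map pr_a : G_B → Cohen forcing 2^{<ω}, sending p to the sequence ⟨p(a,k) : k < n_p⟩ (or the empty sequence if a ∉ F_p), is a forcing projection: it is monotone, surjective, and any extension in 2^{<ω} of pr_a(p) is realized by some extension of p. -/

import Mathlib

open Set

universe u

variable {Ω : Type u}

/-- `η` respects the 2-graph given by `R` on the set `D`. -/
def RespectsOn (R : Fin 2 → Ω → Ω → Prop) (D : Set Ω) (η : Ω → Fin 2) : Prop :=
  ∀ e : Fin 2, ∀ a ∈ D, ∀ b ∈ D, R e a b → ¬(η a = e ∧ η b = e)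

/-- A condition of the forcing `G_B`. -/
structure GBCond (Ω : Type u) where
  F : Finset Ω
  n : ℕ
  v : Ω → ℕ → Fin 2
  empty_iff : F = ∅ ↔ n = 0

/-- The order of `G_B`. -/
def GBle (R : Fin 2 → Ω → Ω → Prop) (q p : GBCond Ω) : Prop :=
  p.F ⊆ q.F ∧ p.n ≤ q.n ∧
    (∀ a ∈ p.F, ∀ k < p.n, q.v a k = p.v a k) ∧
    ∀ k, p.n ≤ k → k < q.n → ∀ e : Fin 2, ∀ a ∈ p.F, ∀ b ∈ p.F,
      R e a b → ¬(q.v a k = e ∧ q.v b k = e)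

/-- The projection `pr_a : G_B → 2^{<ω}`, sending `p` to `⟨p(a,k) : k < n_p⟩`
(the empty sequence if `a ∉ F_p`). -/
def proj [DecidableEq Ω] (a : Ω) (p : GBCond Ω) : List (Fin 2) :=
  if a ∈ p.F then List.ofFn (fun k : Fin p.n => p.v a k) else []

lemma prefix_of_getElem {α} {l₁ l₂ : List α} (h : l₁.length ≤ l₂.length)
    (hg : ∀ i (hi : i < l₁.length), l₁[i] = l₂[i]'(lt_of_lt_of_le hi h)) : l₁ <+: l₂ := by
  rw [List.prefix_iff_eq_take]
  apply List.ext_getElem (by simp [h])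
  intro i h1 h2
  simp only [List.getElem_take]
  exact hg i (by simpa using h1)

/-- For a suitable 2-graph `B` (in particular: every vertex can be given either color by
some total respecting coloring) and any vertex `a`, the map `pr_a : G_B → 2^{<ω}` into
Cohen forcing (ordered by end-extension) is a forcing projection: it is monotone,
surjective, and any end-extension `s` of `pr_a(p)` is realized by some extension of `p`. -/
theorem proj_is_forcing_projection [DecidableEq Ω]
    (R : Fin 2 → Ω → Ω → Prop)
    (hirr : ∀ e, Irreflexive (R e)) (hsym : ∀ e, Symmetric (R e))
    (hdisj : ∀ a b, ¬(R 0 a b ∧ R 1 a b))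
    (hsuit : ∀ (b : Ω) (e : Fin 2), ∃ η : Ω → Fin 2, RespectsOn R Set.univ η ∧ η b = e)
    (a : Ω) :
    (∀ p q : GBCond Ω, GBle R q p → proj a p <+: proj a q) ∧
    (∀ (p : GBCond Ω) (s : List (Fin 2)), proj a p <+: s →
      ∃ q : GBCond Ω, GBle R q p ∧ s <+: proj a q) ∧
    Function.Surjective (proj a) := by
  classical
  refine ⟨?_, ?_, ?_⟩
  · -- monotone
    intro p q hle
    by_cases ha : a ∈ p.F
    · have ha' : a ∈ q.F := hle.1 ha
      unfold proj
      rw [if_pos ha, if_pos ha']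
      apply prefix_of_getElem (by simpa using hle.2.1)
      intro i hi
      simp only [List.getElem_ofFn]
      exact (hle.2.2.1 a ha i (by simpa using hi)).symm
    · simp [proj, ha]
  · -- lifting of extensions
    intro p s hps
    choose η hη hηa using fun k => hsuit a (s.getD k 0)
    refine ⟨⟨insert a p.F, max p.n (max s.length 1),
      fun x k => if x ∈ p.F ∧ k < p.n then p.v x k else η k x,
      ⟨fun h => absurd h (Finset.insert_ne_empty a p.F), fun h => by omega⟩⟩, ?_, ?_⟩
    · refine ⟨Finset.subset_insert a p.F, le_max_left _ _, ?_, ?_⟩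
      · intro x hx k hk
        simp [hx, hk]
      · intro k hk1 hk2 e x hx y hy hR hcon
        simp only [hk1.not_gt, and_false, if_false] at hcon
        exact hη k e x trivial y trivial hR hcon
    · unfold proj
      rw [if_pos (Finset.mem_insert_self a p.F)]
      apply prefix_of_getElem (by simp)
      intro i hi
      simp only [List.getElem_ofFn]
      by_cases hc : a ∈ p.F ∧ i < p.n
      · rw [if_pos hc]
        have hlen : (proj a p).length = p.n := by simp [proj, hc.1]
        have := hps.getElem (i := i) (by omega)
        simpa [proj, hc.1] using this.symm
      · rw [if_neg hc, hηa i, List.getD_eq_getElem s 0 hi]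
  · -- surjective
    intro s
    rcases eq_or_ne s [] with rfl | hs
    · exact ⟨⟨∅, 0, fun _ _ => 0, by simp⟩, by simp [proj]⟩
    · refine ⟨⟨{a}, s.length, fun _ k => s.getD k 0,
        ⟨fun h => absurd h (Finset.singleton_ne_empty a),
         fun h => absurd (List.length_eq_zero_iff.mp h) hs⟩⟩, ?_⟩
      unfold proj
      rw [if_pos (Finset.mem_singleton_self a)]
      apply List.ext_getElem (by simp)
      intro i h1 h2
      simp [List.getD_eq_getElem s 0 h2]
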